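/- Let A > 0 and let a, b, c be real numbers with −1 < a, 0 < c, and a − 2b + 1 < c. Then ε^c · ∫_{0}^{A/ε} r^a · (2/(1+r²))^b dr tends to 0 as ε → 0 from the right (the integral being over the interval (0, A/ε] with respect to Lebesgue measure, and r^a, (2/(1+r²))^b, ε^c denoting real powers). -/

import Mathlib

open MeasureTheory Filter

-- pointwise bound lemma
lemma conf_pointwise (b : ℝ) {r : ℝ} (hr : 0 < r) :
    (2 / (1 + r ^ 2)) ^ b ≤ (2 : ℝ) ^ |b| * (if r ≤ 1 then 1 else r ^ (-2 * b)) := by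
  have h1 : (0:ℝ) < 1 + r ^ 2 := by positivity
  have hf0 : (0:ℝ) < 2 / (1 + r ^ 2) := by positivity
  have hK1 : (1:ℝ) ≤ (2:ℝ) ^ |b| := Real.one_le_rpow one_le_two (abs_nonneg b)
  by_cases hr1 : r ≤ 1
  · rw [if_pos hr1, mul_one]
    have hfle2 : 2 / (1 + r ^ 2) ≤ 2 := by
      rw [div_le_iff₀ h1]; nlinarith
    have hf1 : (1:ℝ) ≤ 2 / (1 + r ^ 2) := by
      rw [le_div_iff₀ h1]; nlinarith
    rcases le_or_gt 0 b with hb | hb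
    · calc (2 / (1 + r ^ 2)) ^ b ≤ (2:ℝ) ^ b :=
            Real.rpow_le_rpow hf0.le hfle2 hb
        _ = (2:ℝ) ^ |b| := by rw [abs_of_nonneg hb]
    · exact le_trans (Real.rpow_le_one_of_one_le_of_nonpos hf1 hb.le) hK1
  · rw [if_neg hr1]
    push_neg at hr1
    have hrpow2 : r ^ (2:ℝ) = r ^ 2 := by
      rw [show ((2:ℝ)) = ((2:ℕ):ℝ) by norm_num, Real.rpow_natCast]
    have hrneg2 : r ^ (-2:ℝ) = (r ^ 2)⁻¹ := by
      rw [Real.rpow_neg hr.le, hrpow2]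
    have hr2pos : (0:ℝ) < r ^ 2 := by positivity
    rcases le_or_gt 0 b with hb | hb
    · have hfle : 2 / (1 + r ^ 2) ≤ 2 * r ^ (-2:ℝ) := by
        rw [hrneg2, ← div_eq_mul_inv, div_le_div_iff₀ h1 hr2pos]
        nlinarith
      calc (2 / (1 + r ^ 2)) ^ b ≤ (2 * r ^ (-2:ℝ)) ^ b :=
            Real.rpow_le_rpow hf0.le hfle hb
        _ = (2:ℝ) ^ b * (r ^ (-2:ℝ)) ^ b :=
            Real.mul_rpow (by norm_num) (Real.rpow_nonneg hr.le _)
        _ = (2:ℝ) ^ |b| * r ^ (-2 * b) := by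
            rw [abs_of_nonneg hb, ← Real.rpow_mul hr.le]
    · have hfge : r ^ (-2:ℝ) ≤ 2 / (1 + r ^ 2) := by
        rw [hrneg2, le_div_iff₀ h1, inv_mul_eq_div, div_le_iff₀ hr2pos]
        nlinarith
      calc (2 / (1 + r ^ 2)) ^ b ≤ (r ^ (-2:ℝ)) ^ b :=
            Real.rpow_le_rpow_of_nonpos (by positivity) hfge hb.le
        _ = r ^ (-2 * b) := by rw [← Real.rpow_mul hr.le]
        _ ≤ (2:ℝ) ^ |b| * r ^ (-2 * b) := by
            nth_rewrite 1 [← one_mul (r ^ (-2 * b))]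
            exact mul_le_mul_of_nonneg_right hK1 (Real.rpow_nonneg hr.le _)

theorem tendsto_rpow_mul_integral_conformal_factor (A : ℝ) (hA : 0 < A)
    (a b c : ℝ) (ha : -1 < a) (hc : 0 < c) (habc : a - 2 * b + 1 < c) :
    Tendsto
      (fun ε : ℝ => ε ^ c * ∫ r in Set.Ioc (0 : ℝ) (A / ε), r ^ a * (2 / (1 + r ^ 2)) ^ b)
      (nhdsWithin 0 (Set.Ioi 0)) (nhds 0) := by
  set q : ℝ := max (a - 2 * b) (c / 2 - 1) with hqdef
  have hq1 : -1 < q := lt_max_of_lt_right (by linarith)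
  have hqc : q + 1 < c := by
    rcases max_cases (a - 2 * b) (c / 2 - 1) with ⟨h, _⟩ | ⟨h, _⟩ <;>
      rw [hqdef, h] <;> linarith
  have hq1' : (0:ℝ) < q + 1 := by linarith
  have ha1 : (0:ℝ) < a + 1 := by linarith
  set K : ℝ := (2:ℝ) ^ |b| with hKdef
  have hK1 : (1:ℝ) ≤ K := Real.one_le_rpow one_le_two (abs_nonneg b)
  have hK0 : (0:ℝ) < K := lt_of_lt_of_le one_pos hK1
  -- the dominating function
  set g : ℝ → ℝ := fun r => K * (if r ≤ 1 then r ^ a else r ^ q) with hgdef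
  have hhg : ∀ r : ℝ, 0 < r → r ^ a * (2 / (1 + r ^ 2)) ^ b ≤ g r := by
    intro r hr
    have := conf_pointwise b hr
    by_cases hr1 : r ≤ 1
    · rw [if_pos hr1] at this
      rw [hgdef]; simp only [if_pos hr1]
      calc r ^ a * (2 / (1 + r ^ 2)) ^ b ≤ r ^ a * (K * 1) :=
            mul_le_mul_of_nonneg_left this (Real.rpow_nonneg hr.le _)
        _ = K * r ^ a := by ring
    · rw [if_neg hr1] at this
      push_neg at hr1
      rw [hgdef]; simp only [if_neg (not_le.mpr hr1)]
      calc r ^ a * (2 / (1 + r ^ 2)) ^ b ≤ r ^ a * (K * r ^ (-2 * b)) :=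
            mul_le_mul_of_nonneg_left this (Real.rpow_nonneg hr.le _)
        _ = K * r ^ (a + -2 * b) := by
            rw [Real.rpow_add hr]; ring
        _ ≤ K * r ^ q :=
            mul_le_mul_of_nonneg_left
              (Real.rpow_le_rpow_of_exponent_le hr1.le (by rw [hqdef]; exact le_max_of_le_left (by linarith))) hK0.le
  -- main estimate for each small ε
  have key : ∀ ε : ℝ, 0 < ε → ε < A →
      ε ^ c * ∫ r in Set.Ioc (0 : ℝ) (A / ε), r ^ a * (2 / (1 + r ^ 2)) ^ b
        ≤ K / (a + 1) * ε ^ c + K * A ^ (q + 1) / (q + 1) * ε ^ (c - (q + 1)) := by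
    intro ε hε hεA
    set R : ℝ := A / ε with hRdef
    have hR1 : (1:ℝ) ≤ R := (le_div_iff₀ hε).mpr (by linarith)
    have hR0 : (0:ℝ) < R := lt_of_lt_of_le one_pos hR1
    -- integrability of g on pieces
    have hint1 : IntegrableOn (fun r : ℝ => r ^ a) (Set.Ioc (0:ℝ) 1) :=
      (intervalIntegral.intervalIntegrable_rpow' ha (a := 0) (b := 1)).1
    have hint2 : IntegrableOn (fun r : ℝ => r ^ q) (Set.Ioc (1:ℝ) R) :=
      (intervalIntegral.intervalIntegrable_rpow' hq1 (a := 1) (b := R)).1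
    have hg1 : IntegrableOn g (Set.Ioc (0:ℝ) 1) := by
      apply MeasureTheory.IntegrableOn.congr_fun (hint1.const_mul K) _ measurableSet_Ioc
      intro r hr; rw [hgdef]; simp [if_pos hr.2]
    have hg2 : IntegrableOn g (Set.Ioc (1:ℝ) R) := by
      apply MeasureTheory.IntegrableOn.congr_fun (hint2.const_mul K) _ measurableSet_Ioc
      intro r hr; rw [hgdef]; simp [if_neg (not_le.mpr hr.1)]
    have hunion : Set.Ioc (0:ℝ) 1 ∪ Set.Ioc 1 R = Set.Ioc 0 R :=
      Set.Ioc_union_Ioc_eq_Ioc (by norm_num) hR1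
    have hgint : IntegrableOn g (Set.Ioc (0:ℝ) R) := by
      rw [← hunion]; exact hg1.union hg2
    -- compare integrals
    have hmono : (∫ r in Set.Ioc (0:ℝ) R, r ^ a * (2 / (1 + r ^ 2)) ^ b)
        ≤ ∫ r in Set.Ioc (0:ℝ) R, g r := by
      apply integral_mono_of_nonneg
      · rw [EventuallyLE, ae_restrict_iff' measurableSet_Ioc]
        exact Eventually.of_forall fun r hr => by have h0 := hr.1; positivity
      · exact hgint
      · rw [EventuallyLE, ae_restrict_iff' measurableSet_Ioc]
        exact Eventually.of_forall fun r hr => hhg r hr.1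
    -- compute ∫ g
    have hdisj : Disjoint (Set.Ioc (0:ℝ) 1) (Set.Ioc 1 R) := Set.Ioc_disjoint_Ioc_of_le le_rfl
    have hsplit : (∫ r in Set.Ioc (0:ℝ) R, g r)
        = (∫ r in Set.Ioc (0:ℝ) 1, g r) + ∫ r in Set.Ioc (1:ℝ) R, g r := by
      rw [← hunion, setIntegral_union hdisj measurableSet_Ioc hg1 hg2]
    have hI1 : (∫ r in Set.Ioc (0:ℝ) 1, g r) = K * (1 / (a + 1)) := by
      rw [setIntegral_congr_fun measurableSet_Ioc (g := fun r => K * r ^ a)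
        (fun r hr => by rw [hgdef]; simp [if_pos hr.2]),
        integral_const_mul, ← intervalIntegral.integral_of_le (by norm_num : (0:ℝ) ≤ 1),
        integral_rpow (Or.inl ha)]
      rw [Real.one_rpow, Real.zero_rpow ha1.ne']
      ring
    have hI2 : (∫ r in Set.Ioc (1:ℝ) R, g r) = K * ((R ^ (q+1) - 1) / (q + 1)) := by
      rw [setIntegral_congr_fun measurableSet_Ioc (g := fun r => K * r ^ q)
        (fun r hr => by rw [hgdef]; simp [if_neg (not_le.mpr hr.1)]),
        integral_const_mul, ← intervalIntegral.integral_of_le hR1,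
        integral_rpow (Or.inl hq1), Real.one_rpow]
    have hεc : (0:ℝ) ≤ ε ^ c := Real.rpow_nonneg hε.le _
    have hRq : ε ^ c * R ^ (q+1) = A ^ (q+1) * ε ^ (c - (q+1)) := by
      rw [hRdef, Real.div_rpow hA.le hε.le, Real.rpow_sub hε]
      field_simp
    calc ε ^ c * ∫ r in Set.Ioc (0 : ℝ) R, r ^ a * (2 / (1 + r ^ 2)) ^ b
        ≤ ε ^ c * ∫ r in Set.Ioc (0:ℝ) R, g r := mul_le_mul_of_nonneg_left hmono hεc
      _ = ε ^ c * (K * (1 / (a + 1)) + K * ((R ^ (q+1) - 1) / (q + 1))) := by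
          rw [hsplit, hI1, hI2]
      _ ≤ ε ^ c * (K * (1 / (a + 1)) + K * (R ^ (q+1) / (q + 1))) := by
          apply mul_le_mul_of_nonneg_left _ hεc
          have h' : (R ^ (q+1) - 1) / (q + 1) ≤ R ^ (q+1) / (q + 1) := by
            gcongr
            linarith
          nlinarith [h', hK0]
      _ = K / (a + 1) * ε ^ c + K / (q + 1) * (ε ^ c * R ^ (q+1)) := by ring
      _ = K / (a + 1) * ε ^ c + K * A ^ (q + 1) / (q + 1) * ε ^ (c - (q + 1)) := by
          rw [hRq]; ring
  -- squeeze
  have hmem : Set.Ioo (0:ℝ) A ∈ nhdsWithin (0:ℝ) (Set.Ioi 0) :=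
    Ioo_mem_nhdsGT_of_mem ⟨le_refl 0, hA⟩
  apply squeeze_zero' (g := fun ε => K / (a + 1) * ε ^ c + K * A ^ (q + 1) / (q + 1) * ε ^ (c - (q + 1)))
  · filter_upwards [self_mem_nhdsWithin] with ε (hε : ε ∈ Set.Ioi (0:ℝ))
    have : (0:ℝ) ≤ ∫ r in Set.Ioc (0 : ℝ) (A / ε), r ^ a * (2 / (1 + r ^ 2)) ^ b :=
      setIntegral_nonneg measurableSet_Ioc fun r hr => by
        have := hr.1; positivity
    exact mul_nonneg (Real.rpow_nonneg (le_of_lt hε) _) this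
  · filter_upwards [hmem] with ε hε
    exact key ε hε.1 hε.2
  · have h1 : Tendsto (fun ε : ℝ => ε ^ c) (nhdsWithin 0 (Set.Ioi 0)) (nhds 0) := by
      have := (Real.continuousAt_rpow_const 0 c (Or.inr hc.le)).tendsto.mono_left (nhdsWithin_le_nhds (s := Set.Ioi (0:ℝ)))
      rwa [Real.zero_rpow hc.ne'] at this
    have h2 : Tendsto (fun ε : ℝ => ε ^ (c - (q+1))) (nhdsWithin 0 (Set.Ioi 0)) (nhds 0) := by
      have hpos : 0 < c - (q + 1) := by linarith
      have := (Real.continuousAt_rpow_const 0 (c - (q+1)) (Or.inr hpos.le)).tendsto.mono_left (nhdsWithin_le_nhds (s := Set.Ioi (0:ℝ)))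
      rwa [Real.zero_rpow hpos.ne'] at this
    have := (h1.const_mul (K / (a + 1))).add (h2.const_mul (K * A ^ (q + 1) / (q + 1)))
    simpa using this
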